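/- Let K be an ordered valued field with value group Γ and residue field k, let G ⊆ K^{>0} be a monomial group (v restricts to an isomorphism G ≅ Γ), and let ε: K → k((Γ)) be an embedding of valued fields into the Hahn series field such that ε(g) = x^{v(g)} for all g ∈ G. Then ε is order-preserving, where k((Γ)) carries the order with a > 0 iff the leading coefficient of a is positive. -/

import Mathlib

/-- Let `K` be an ordered valued field with (order-compatible) valuation
`v` with value group `Γ` and residue field `k`, let `G ⊆ K^{>0}` be a monomial group,
and let `ε : K → k((Γ))` be an embedding of valued fields into the Hahn series field
such that `ε g = x ^ (v g)` for all `g ∈ G` and compatible with the (order-preserving)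
residue map. Then `ε` preserves the order, where a Hahn series is positive iff its
leading coefficient is positive. -/
theorem hahnSeries_embedding_orderPreserving {K : Type*} [Field K] [LinearOrder K] [IsStrictOrderedRing K]
    {Γ : Type*} [AddCommGroup Γ] [LinearOrder Γ] [IsOrderedAddMonoid Γ]
    {k : Type*} [Field k] [LinearOrder k] [IsStrictOrderedRing k]
    (v : K → Γ)
    (hvmul : ∀ x y : K, x ≠ 0 → y ≠ 0 → v (x * y) = v x + v y)
    (hconvex : ∀ x y : K, 0 < x → x ≤ y → v y ≤ v x)
    (ε : K →+* HahnSeries Γ k)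
    (hval : ∀ x : K, x ≠ 0 → (ε x).order = v x)
    (hres : ∀ x : K, 0 ≤ x → (x = 0 ∨ 0 ≤ v x) → 0 ≤ (ε x).coeff 0)
    (G : Set K)
    (hGpos : ∀ g ∈ G, 0 < g)
    (hGone : (1 : K) ∈ G)
    (hGmul : ∀ g ∈ G, ∀ h ∈ G, g * h ∈ G)
    (hGinv : ∀ g ∈ G, g⁻¹ ∈ G)
    (hGinj : ∀ g ∈ G, ∀ h ∈ G, v g = v h → g = h)
    (hGsurj : ∀ γ : Γ, ∃ g ∈ G, v g = γ)
    (hGmono : ∀ g ∈ G, ε g = HahnSeries.single (v g) (1 : k)) :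
    ∀ x : K, 0 < x → 0 < (ε x).coeff (ε x).order := by
  intro x hx
  have hx0 : x ≠ 0 := ne_of_gt hx
  obtain ⟨g, hgG, hvg⟩ := hGsurj (v x)
  have hg : 0 < g := hGpos g hgG
  have hg0 : g ≠ 0 := ne_of_gt hg
  -- v 1 = 0
  have hv1 : v 1 = 0 := by
    have h := hvmul 1 1 one_ne_zero one_ne_zero
    rw [one_mul] at h
    exact left_eq_add.mp h
  have hvinv : v g⁻¹ = - v g := by
    have h := hvmul g g⁻¹ hg0 (inv_ne_zero hg0)
    rw [mul_inv_cancel₀ hg0, hv1] at h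
    exact eq_neg_of_add_eq_zero_right h.symm
  set y := x * g⁻¹ with hy
  have hypos : 0 < y := mul_pos hx (inv_pos.mpr hg)
  have hy0 : y ≠ 0 := ne_of_gt hypos
  have hvy : v y = 0 := by
    rw [hy, hvmul x g⁻¹ hx0 (inv_ne_zero hg0), hvinv, hvg, add_neg_cancel]
  have hcoef : 0 ≤ (ε y).coeff 0 := hres y hypos.le (Or.inr (le_of_eq hvy.symm))
  have hordy : (ε y).order = 0 := by rw [hval y hy0, hvy]
  have hεy0 : ε y ≠ 0 := fun h => hy0 (ε.injective (by rw [h, map_zero]))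
  have hne : (ε y).coeff 0 ≠ 0 := by
    have := mt HahnSeries.coeff_order_eq_zero.mp hεy0
    rwa [hordy] at this
  have hpos0 : 0 < (ε y).coeff 0 := lt_of_le_of_ne hcoef (Ne.symm hne)
  have hxy : x = y * g := by rw [hy, inv_mul_cancel_right₀ hg0]
  have hεx : ε x = ε y * HahnSeries.single (v g) (1 : k) := by
    rw [hxy, map_mul, hGmono g hgG]
  have hordx : (ε x).order = v x := hval x hx0
  have key : (ε y * HahnSeries.single (v g) (1 : k)).coeff (0 + v g)
      = (ε y).coeff 0 * 1 := HahnSeries.coeff_mul_single_add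
  rw [zero_add, mul_one] at key
  rw [hordx, hεx, ← hvg, key]
  exact hpos0
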